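/- Let ε = 1 and let μ₁, μ₂ be defined by μᵢ = √((z−aᵢ)² + ρ²) − (z−aᵢ) with a₁ ≠ a₂, on the domain ρ > 0. Then the function 𝔉 = μ₁μ₂/(μ₁μ₂ + ρ²) satisfies the first-order system (ln 𝔉)_ρ = (ρ/2)((ln μ₁)_ρ(ln μ₂)_ρ − (ln μ₁)_z(ln μ₂)_z) and (ln 𝔉)_z = (ρ/2)((ln μ₁)_ρ(ln μ₂)_z + (ln μ₁)_z(ln μ₂)_ρ). -/

import Mathlib

/-- Partial derivative with respect to the first variable ρ. -/
noncomputable def pd1 (F : ℝ × ℝ → ℝ) (p : ℝ × ℝ) : ℝ := deriv (fun t => F (t, p.2)) p.1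

/-- Partial derivative with respect to the second variable z. -/
noncomputable def pd2 (F : ℝ × ℝ → ℝ) (p : ℝ × ℝ) : ℝ := deriv (fun t => F (p.1, t)) p.2

lemma sqrt_comp_hasDerivAt {f : ℝ → ℝ} {f' x : ℝ} (hf : HasDerivAt f f' x) (h0 : f x ≠ 0) :
    HasDerivAt (fun t => Real.sqrt (f t)) (f' / (2 * Real.sqrt (f x))) x := by
  have h := (Real.hasDerivAt_sqrt h0).comp x hf
  refine h.congr_deriv ?_
  ring

lemma stmt19_alg1 (ρ m₁ m₂ r₁ r₂ : ℝ) (hρ : 0 < ρ) (h₁ : 0 < m₁) (h₂ : 0 < m₂)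
    (hr₁ : 0 < r₁) (hr₂ : 0 < r₂)
    (e₁ : 2 * r₁ * m₁ = m₁ ^ 2 + ρ ^ 2) (e₂ : 2 * r₂ * m₂ = m₂ ^ 2 + ρ ^ 2) :
    ((ρ / r₁ * m₂ + m₁ * (ρ / r₂)) * (m₁ * m₂ + ρ ^ 2) -
        m₁ * m₂ * (ρ / r₁ * m₂ + m₁ * (ρ / r₂) + 2 * ρ)) / (m₁ * m₂ + ρ ^ 2) ^ 2 /
      (m₁ * m₂ / (m₁ * m₂ + ρ ^ 2))
      = ρ / 2 * (ρ / r₁ / m₁ * (ρ / r₂ / m₂) - -(m₁ / r₁) / m₁ * (-(m₂ / r₂) / m₂)) := by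
  have hd : (0:ℝ) < m₁ * m₂ + ρ ^ 2 := by positivity
  have hr1 : r₁ = (m₁ ^ 2 + ρ ^ 2) / (2 * m₁) := by rw [eq_div_iff (by positivity)]; linarith
  have hr2 : r₂ = (m₂ ^ 2 + ρ ^ 2) / (2 * m₂) := by rw [eq_div_iff (by positivity)]; linarith
  subst hr1 hr2
  field_simp
  ring

lemma stmt19_alg2 (ρ m₁ m₂ r₁ r₂ : ℝ) (hρ : 0 < ρ) (h₁ : 0 < m₁) (h₂ : 0 < m₂)
    (hr₁ : 0 < r₁) (hr₂ : 0 < r₂)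
    (e₁ : 2 * r₁ * m₁ = m₁ ^ 2 + ρ ^ 2) (e₂ : 2 * r₂ * m₂ = m₂ ^ 2 + ρ ^ 2) :
    ((-(m₁ / r₁) * m₂ + m₁ * -(m₂ / r₂)) * (m₁ * m₂ + ρ ^ 2) -
        m₁ * m₂ * (-(m₁ / r₁) * m₂ + m₁ * -(m₂ / r₂))) / (m₁ * m₂ + ρ ^ 2) ^ 2 /
      (m₁ * m₂ / (m₁ * m₂ + ρ ^ 2))
      = ρ / 2 * (ρ / r₁ / m₁ * (-(m₂ / r₂) / m₂) + -(m₁ / r₁) / m₁ * (ρ / r₂ / m₂)) := by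
  have hd : (0:ℝ) < m₁ * m₂ + ρ ^ 2 := by positivity
  have hr1 : r₁ = (m₁ ^ 2 + ρ ^ 2) / (2 * m₁) := by rw [eq_div_iff (by positivity)]; linarith
  have hr2 : r₂ = (m₂ ^ 2 + ρ ^ 2) / (2 * m₂) := by rw [eq_div_iff (by positivity)]; linarith
  subst hr1 hr2
  field_simp
  ring

/-- With μᵢ(ρ,z) = √((z−aᵢ)² + ρ²) − (z−aᵢ), a₁ ≠ a₂, the function
𝔉 = μ₁μ₂/(μ₁μ₂ + ρ²) satisfies (ln 𝔉)_ρ = (ρ/2)((ln μ₁)_ρ(ln μ₂)_ρ − (ln μ₁)_z(ln μ₂)_z)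
and (ln 𝔉)_z = (ρ/2)((ln μ₁)_ρ(ln μ₂)_z + (ln μ₁)_z(ln μ₂)_ρ) on ρ > 0
(log-derivatives written as f_x/f). -/
theorem stmt19 (a₁ a₂ : ℝ) (ha : a₁ ≠ a₂) :
    let μ₁ : ℝ × ℝ → ℝ := fun p => Real.sqrt ((p.2 - a₁) ^ 2 + p.1 ^ 2) - (p.2 - a₁)
    let μ₂ : ℝ × ℝ → ℝ := fun p => Real.sqrt ((p.2 - a₂) ^ 2 + p.1 ^ 2) - (p.2 - a₂)
    let F : ℝ × ℝ → ℝ := fun p => μ₁ p * μ₂ p / (μ₁ p * μ₂ p + p.1 ^ 2)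
    ∀ p : ℝ × ℝ, 0 < p.1 →
      pd1 F p / F p
        = p.1 / 2 * ((pd1 μ₁ p / μ₁ p) * (pd1 μ₂ p / μ₂ p)
            - (pd2 μ₁ p / μ₁ p) * (pd2 μ₂ p / μ₂ p)) ∧
      pd2 F p / F p
        = p.1 / 2 * ((pd1 μ₁ p / μ₁ p) * (pd2 μ₂ p / μ₂ p)
            + (pd2 μ₁ p / μ₁ p) * (pd1 μ₂ p / μ₂ p)) := by
  intro μ₁ μ₂ F
  rintro ⟨ρ, z⟩ hp
  replace hp : 0 < ρ := hp
  dsimp only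
  set r₁ := Real.sqrt ((z - a₁) ^ 2 + ρ ^ 2) with hr₁def
  set r₂ := Real.sqrt ((z - a₂) ^ 2 + ρ ^ 2) with hr₂def
  have hr₁ : 0 < r₁ := Real.sqrt_pos.mpr (by positivity)
  have hr₂ : 0 < r₂ := Real.sqrt_pos.mpr (by positivity)
  have hr₁sq : r₁ ^ 2 = (z - a₁) ^ 2 + ρ ^ 2 := Real.sq_sqrt (by positivity)
  have hr₂sq : r₂ ^ 2 = (z - a₂) ^ 2 + ρ ^ 2 := Real.sq_sqrt (by positivity)
  set m₁ := r₁ - (z - a₁) with hm₁def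
  set m₂ := r₂ - (z - a₂) with hm₂def
  have hm₁ : 0 < m₁ := by nlinarith [sq_nonneg (r₁ + (z - a₁))]
  have hm₂ : 0 < m₂ := by nlinarith [sq_nonneg (r₂ + (z - a₂))]
  have hden0 : m₁ * m₂ + ρ ^ 2 ≠ 0 := by positivity
  have hr1' : r₁ = (m₁ ^ 2 + ρ ^ 2) / (2 * m₁) := by
    rw [eq_div_iff (by positivity)]
    rw [hm₁def]; linear_combination hr₁sq
  have hr2' : r₂ = (m₂ ^ 2 + ρ ^ 2) / (2 * m₂) := by
    rw [eq_div_iff (by positivity)]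
    rw [hm₂def]; linear_combination hr₂sq
  -- ρ-derivatives of μ₁, μ₂
  have hd1ρ : HasDerivAt (fun t : ℝ => Real.sqrt ((z - a₁) ^ 2 + t ^ 2) - (z - a₁)) (ρ / r₁) ρ := by
    have hin : HasDerivAt (fun t : ℝ => (z - a₁) ^ 2 + t ^ 2) (2 * ρ) ρ := by
      simpa using (hasDerivAt_pow 2 ρ).const_add ((z - a₁) ^ 2)
    have h := (sqrt_comp_hasDerivAt hin (by positivity)).sub_const (z - a₁)
    refine h.congr_deriv ?_
    rw [hr₁def, mul_div_mul_left _ _ (two_ne_zero)]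
  have hd2ρ : HasDerivAt (fun t : ℝ => Real.sqrt ((z - a₂) ^ 2 + t ^ 2) - (z - a₂)) (ρ / r₂) ρ := by
    have hin : HasDerivAt (fun t : ℝ => (z - a₂) ^ 2 + t ^ 2) (2 * ρ) ρ := by
      simpa using (hasDerivAt_pow 2 ρ).const_add ((z - a₂) ^ 2)
    have h := (sqrt_comp_hasDerivAt hin (by positivity)).sub_const (z - a₂)
    refine h.congr_deriv ?_
    rw [hr₂def, mul_div_mul_left _ _ (two_ne_zero)]
  -- z-derivatives of μ₁, μ₂
  have hd1z : HasDerivAt (fun t : ℝ => Real.sqrt ((t - a₁) ^ 2 + ρ ^ 2) - (t - a₁)) (-(m₁ / r₁)) z := by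
    have hin : HasDerivAt (fun t : ℝ => (t - a₁) ^ 2 + ρ ^ 2) (2 * (z - a₁)) z := by
      simpa using (((hasDerivAt_id z).sub_const a₁).pow 2).add_const (ρ ^ 2)
    have h := (sqrt_comp_hasDerivAt hin (by positivity)).sub ((hasDerivAt_id z).sub_const a₁)
    refine h.congr_deriv ?_
    rw [hm₁def, hr₁def]
    have hs : Real.sqrt ((z - a₁) ^ 2 + ρ ^ 2) ≠ 0 := by positivity
    field_simp
    ring
  have hd2z : HasDerivAt (fun t : ℝ => Real.sqrt ((t - a₂) ^ 2 + ρ ^ 2) - (t - a₂)) (-(m₂ / r₂)) z := by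
    have hin : HasDerivAt (fun t : ℝ => (t - a₂) ^ 2 + ρ ^ 2) (2 * (z - a₂)) z := by
      simpa using (((hasDerivAt_id z).sub_const a₂).pow 2).add_const (ρ ^ 2)
    have h := (sqrt_comp_hasDerivAt hin (by positivity)).sub ((hasDerivAt_id z).sub_const a₂)
    refine h.congr_deriv ?_
    rw [hm₂def, hr₂def]
    have hs : Real.sqrt ((z - a₂) ^ 2 + ρ ^ 2) ≠ 0 := by positivity
    field_simp
    ring
  -- derivative of F in ρ
  have hnumρ : HasDerivAt
      (fun t : ℝ => (Real.sqrt ((z - a₁) ^ 2 + t ^ 2) - (z - a₁)) *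
        (Real.sqrt ((z - a₂) ^ 2 + t ^ 2) - (z - a₂)))
      (ρ / r₁ * m₂ + m₁ * (ρ / r₂)) ρ := hd1ρ.mul hd2ρ
  have hdenρ : HasDerivAt
      (fun t : ℝ => (Real.sqrt ((z - a₁) ^ 2 + t ^ 2) - (z - a₁)) *
        (Real.sqrt ((z - a₂) ^ 2 + t ^ 2) - (z - a₂)) + t ^ 2)
      (ρ / r₁ * m₂ + m₁ * (ρ / r₂) + 2 * ρ) ρ := by
    have h := hnumρ.add (hasDerivAt_pow 2 ρ)
    refine h.congr_deriv ?_
    norm_num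
  have hFρ := hnumρ.div hdenρ hden0
  -- derivative of F in z
  have hnumz : HasDerivAt
      (fun t : ℝ => (Real.sqrt ((t - a₁) ^ 2 + ρ ^ 2) - (t - a₁)) *
        (Real.sqrt ((t - a₂) ^ 2 + ρ ^ 2) - (t - a₂)))
      (-(m₁ / r₁) * m₂ + m₁ * -(m₂ / r₂)) z := hd1z.mul hd2z
  have hdenz : HasDerivAt
      (fun t : ℝ => (Real.sqrt ((t - a₁) ^ 2 + ρ ^ 2) - (t - a₁)) *
        (Real.sqrt ((t - a₂) ^ 2 + ρ ^ 2) - (t - a₂)) + ρ ^ 2)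
      (-(m₁ / r₁) * m₂ + m₁ * -(m₂ / r₂)) z := by
    simpa using hnumz.add_const (ρ ^ 2)
  have hFz := hnumz.div hdenz hden0
  -- identify the partial derivatives
  have e1 : pd1 F (ρ, z) =
      ((ρ / r₁ * m₂ + m₁ * (ρ / r₂)) * (m₁ * m₂ + ρ ^ 2) -
        m₁ * m₂ * (ρ / r₁ * m₂ + m₁ * (ρ / r₂) + 2 * ρ)) / (m₁ * m₂ + ρ ^ 2) ^ 2 := hFρ.deriv
  have e2 : pd2 F (ρ, z) =
      ((-(m₁ / r₁) * m₂ + m₁ * -(m₂ / r₂)) * (m₁ * m₂ + ρ ^ 2) -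
        m₁ * m₂ * (-(m₁ / r₁) * m₂ + m₁ * -(m₂ / r₂))) / (m₁ * m₂ + ρ ^ 2) ^ 2 := hFz.deriv
  have e3 : pd1 μ₁ (ρ, z) = ρ / r₁ := hd1ρ.deriv
  have e4 : pd1 μ₂ (ρ, z) = ρ / r₂ := hd2ρ.deriv
  have e5 : pd2 μ₁ (ρ, z) = -(m₁ / r₁) := hd1z.deriv
  have e6 : pd2 μ₂ (ρ, z) = -(m₂ / r₂) := hd2z.deriv
  have eF : F (ρ, z) = m₁ * m₂ / (m₁ * m₂ + ρ ^ 2) := rfl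
  have eμ1 : μ₁ (ρ, z) = m₁ := rfl
  have eμ2 : μ₂ (ρ, z) = m₂ := rfl
  rw [e1, e2, e3, e4, e5, e6, eF, eμ1, eμ2]
  have he₁ : 2 * r₁ * m₁ = m₁ ^ 2 + ρ ^ 2 := by rw [hm₁def]; linear_combination hr₁sq
  have he₂ : 2 * r₂ * m₂ = m₂ ^ 2 + ρ ^ 2 := by rw [hm₂def]; linear_combination hr₂sq
  exact ⟨stmt19_alg1 ρ m₁ m₂ r₁ r₂ hp hm₁ hm₂ hr₁ hr₂ he₁ he₂,
    stmt19_alg2 ρ m₁ m₂ r₁ r₂ hp hm₁ hm₂ hr₁ hr₂ he₁ he₂⟩
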